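/- For R > 1, the matrix H_N^{(0,R)} = −R|N⟩⟨N| + H_N^walk has exactly one eigenvalue strictly below −2, and this eigenvalue converges to −(R + 1/R) as N → ∞; all other eigenvalues lie in [−2, 2]. -/

import Mathlib

open Matrix Real Finset

/-- The negative adjacency matrix of the path on vertices `0,…,N`. -/
noncomputable def walkM (N : ℕ) : Matrix (Fin (N+1)) (Fin (N+1)) ℝ :=
  Matrix.of fun i j => if (i:ℕ)+1 = (j:ℕ) ∨ (j:ℕ)+1 = (i:ℕ) then -1 else 0

/-- `H_N^{(L,R)} = −L|0⟩⟨0| − R|N⟩⟨N| + H_N^walk`. -/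
noncomputable def HLR (N : ℕ) (L R : ℝ) : Matrix (Fin (N+1)) (Fin (N+1)) ℝ :=
  walkM N + Matrix.single 0 0 (-L)
    + Matrix.single (Fin.last N) (Fin.last N) (-R)

/-- `μ` is an eigenvalue of the real matrix `M`. -/
def hasEig {n : Type*} [Fintype n] (M : Matrix n n ℝ) (μ : ℝ) : Prop :=
  ∃ v : n → ℝ, v ≠ 0 ∧ M.mulVec v = μ • v

namespace Stmt14

/-- Extension of a vector on `Fin (M+2)` to `ℕ` by zero. -/
noncomputable def extv (M : ℕ) (v : Fin (M+2) → ℝ) (n : ℕ) : ℝ :=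
  if h : n < M + 2 then v ⟨n, h⟩ else 0

lemma ext_apply (M : ℕ) (v : Fin (M+2) → ℝ) (i : Fin (M+2)) :
    extv M v (i : ℕ) = v i := by
  simp [extv, i.isLt]

lemma sum_ite_eq_ext (M : ℕ) (v : Fin (M+2) → ℝ) (m : ℕ) :
    ∑ j : Fin (M+2), (if m = (j:ℕ) then v j else 0) = extv M v m := by
  by_cases h : m < M + 2
  · rw [Finset.sum_eq_single (⟨m, h⟩ : Fin (M+2))]
    · simp [extv, h]
    · intro b _ hb
      rw [if_neg]
      intro hc
      exact hb (by apply Fin.ext; simp [← hc])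
    · simp
  · rw [extv, dif_neg h]
    apply Finset.sum_eq_zero
    intro j _
    rw [if_neg]
    intro hc
    exact h (hc ▸ j.isLt)

/-- Row-wise description of `HLR (M+1) 0 R` acting on a vector. -/
lemma mulVec_HLR (M : ℕ) (R : ℝ) (v : Fin (M+2) → ℝ) (i : Fin (M+2)) :
    (HLR (M+1) 0 R).mulVec v i =
      -(extv M v ((i:ℕ)+1)) - (if (i:ℕ) = 0 then 0 else extv M v ((i:ℕ)-1))
        - (if (i:ℕ) = M+1 then R * extv M v (M+1) else 0) := by
  rw [HLR, Matrix.add_mulVec, Matrix.add_mulVec]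
  simp only [neg_zero, Matrix.single_zero, Matrix.zero_mulVec, Pi.add_apply,
    Pi.zero_apply, add_zero]
  have hstd : (Matrix.single (Fin.last (M+1)) (Fin.last (M+1)) (-R)).mulVec v i
      = -(if (i:ℕ) = M+1 then R * extv M v (M+1) else 0) := by
    rw [Matrix.single_mulVec]
    by_cases h : i = Fin.last (M+1)
    · subst h
      rw [Function.update_self, if_pos (by simp [Fin.last])]
      have : extv M v (M+1) = v (Fin.last (M+1)) := by simp [extv, Fin.last]
      rw [this]; ring
    · rw [Function.update_of_ne h, if_neg, neg_zero]
      · rfl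
      · intro hc; exact h (by apply Fin.ext; simpa [Fin.last] using hc)
  have hwalk : (walkM (M+1)).mulVec v i
      = -(extv M v ((i:ℕ)+1)) + -(if (i:ℕ) = 0 then 0 else extv M v ((i:ℕ)-1)) := by
    have split : ∀ j : Fin (M+2),
        (walkM (M+1)) i j * v j
        = -(if (i:ℕ)+1 = (j:ℕ) then v j else 0) + -(if (j:ℕ)+1 = (i:ℕ) then v j else 0) := by
      intro j
      show (if (i:ℕ)+1 = (j:ℕ) ∨ (j:ℕ)+1 = (i:ℕ) then (-1:ℝ) else 0) * v j = _
      by_cases hA : (i:ℕ)+1 = (j:ℕ) <;> by_cases hB2 : (j:ℕ)+1 = (i:ℕ)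
      · exfalso; omega
      · simp [hA, hB2]
      · simp [hA, hB2]
      · simp [hA, hB2]
    have : (walkM (M+1)).mulVec v i = ∑ j : Fin (M+2), (walkM (M+1)) i j * v j := rfl
    rw [this, Finset.sum_congr rfl (fun j _ => split j), Finset.sum_add_distrib,
      Finset.sum_neg_distrib, Finset.sum_neg_distrib, sum_ite_eq_ext]
    congr 1
    by_cases hi : (i:ℕ) = 0
    · rw [if_pos hi, neg_zero, neg_eq_zero]
      apply Finset.sum_eq_zero
      intro j _
      rw [if_neg (by omega)]
    · rw [if_neg hi]
      have : ∀ j : Fin (M+2), (if (j:ℕ)+1 = (i:ℕ) then v j else 0)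
          = (if (i:ℕ)-1 = (j:ℕ) then v j else 0) := by
        intro j
        congr 1
        simp only [eq_iff_iff]
        omega
      rw [Finset.sum_congr rfl (fun j _ => this j), sum_ite_eq_ext]
  show (walkM (M+1)).mulVec v i + (Matrix.single _ _ _).mulVec v i = _
  rw [hwalk, hstd]
  ring

/-- Transfer-recurrence polynomials. -/
noncomputable def pp (μ : ℝ) : ℕ → ℝ
  | 0 => 1
  | 1 => -μ
  | (n+2) => -μ * pp μ (n+1) - pp μ n

lemma pp_zero (μ : ℝ) : pp μ 0 = 1 := rfl
lemma pp_one (μ : ℝ) : pp μ 1 = -μ := rfl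
lemma pp_two (μ : ℝ) (n : ℕ) : pp μ (n+2) = -μ * pp μ (n+1) - pp μ n := rfl
lemma pp_two' (μ : ℝ) (n : ℕ) : pp μ (n+1+1) = -μ * pp μ (n+1) - pp μ n := rfl

/-- If the boundary condition holds, the canonical transfer vector is an eigenvector. -/
lemma eig_vec (M : ℕ) (R μ : ℝ) (h : pp μ M + (μ + R) * pp μ (M+1) = 0) :
    (HLR (M+1) 0 R).mulVec (fun i : Fin (M+2) => pp μ (i:ℕ))
      = μ • (fun i : Fin (M+2) => pp μ (i:ℕ)) := by
  funext i
  rw [mulVec_HLR]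
  have hext : ∀ n, extv M (fun j : Fin (M+2) => pp μ (j:ℕ)) n
      = if n < M+2 then pp μ n else 0 := by
    intro n
    by_cases hn : n < M+2 <;> simp [extv, hn]
  rcases i with ⟨n, hn⟩
  simp only [Fin.val_mk, Pi.smul_apply, smul_eq_mul]
  rw [hext, hext, hext]
  by_cases h0 : n = 0
  · subst h0
    rw [if_pos (by omega), if_pos rfl, if_neg (by omega)]
    simp [pp_zero, pp_one]
  · by_cases h1 : n = M+1
    · subst h1
      rw [if_neg (by omega), if_neg h0, if_pos (by omega), if_pos rfl, if_pos (by omega)]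
      have hm : M + 1 - 1 = M := by omega
      rw [hm]
      linarith
    · obtain ⟨k, rfl⟩ : ∃ k, n = k + 1 := ⟨n - 1, by omega⟩
      rw [if_pos (by omega), if_neg h0, if_pos (by omega), if_neg h1]
      have hk : k + 1 - 1 = k := by omega
      rw [hk, pp_two]
      ring

/-- The eigenvalue characterization. -/
lemma eig_iff (M : ℕ) (R μ : ℝ) :
    hasEig (HLR (M+1) 0 R) μ ↔ pp μ M + (μ + R) * pp μ (M+1) = 0 := by
  constructor
  · rintro ⟨v, hv0, hv⟩
    have row : ∀ i : Fin (M+2),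
        -(extv M v ((i:ℕ)+1)) - (if (i:ℕ) = 0 then 0 else extv M v ((i:ℕ)-1))
          - (if (i:ℕ) = M+1 then R * extv M v (M+1) else 0) = μ * extv M v (i:ℕ) := by
      intro i
      rw [← mulVec_HLR M R v i, hv, ext_apply]
      simp
    have key : ∀ n, n ≤ M + 1 → extv M v n = extv M v 0 * pp μ n := by
      intro n
      induction n using Nat.strong_induction_on with
      | _ n ih =>
        intro hn
        match n with
        | 0 => simp [pp_zero]
        | 1 =>
          have h0 := row ⟨0, by omega⟩
          simp only [Fin.val_mk] at h0
          rw [if_pos trivial, if_neg (by omega)] at h0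
          rw [pp_one]
          linarith
        | (k+2) =>
          have hrow := row ⟨k+1, by omega⟩
          simp only [Fin.val_mk] at hrow
          rw [if_neg (by omega), if_neg (by omega)] at hrow
          have hk : k + 1 - 1 = k := by omega
          rw [hk] at hrow
          have i1 := ih (k+1) (by omega) (by omega)
          have i2 := ih k (by omega) (by omega)
          rw [pp_two]
          rw [i1, i2] at hrow
          linarith
    have hlast := row ⟨M+1, by omega⟩
    simp only [Fin.val_mk] at hlast
    rw [if_pos trivial, if_neg (show ¬ (M+1 = 0) by omega)] at hlast
    have hz : extv M v (M+1+1) = 0 := by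
      rw [extv, dif_neg (by omega)]
    have hm : M + 1 - 1 = M := by omega
    rw [hz, hm, key M (by omega), key (M+1) (by omega)] at hlast
    have hv00 : extv M v 0 ≠ 0 := by
      intro h00
      apply hv0
      funext i
      have := key (i : ℕ) (by omega)
      rw [ext_apply] at this
      rw [this, h00, zero_mul]
      rfl
    have : extv M v 0 * (pp μ M + (μ + R) * pp μ (M+1)) = 0 := by linear_combination -hlast
    rcases mul_eq_zero.mp this with h | h
    · exact absurd h hv00
    · exact h
  · intro h
    refine ⟨fun i => pp μ (i : ℕ), ?_, eig_vec M R μ h⟩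
    intro h0
    have := congrFun h0 0
    simp [pp_zero] at this

lemma pp_sinh (q : ℝ) : ∀ n : ℕ,
    Real.sinh q * pp (-2 * Real.cosh q) n = Real.sinh (((n:ℝ)+1) * q) := by
  have key : ∀ n : ℕ,
      Real.sinh q * pp (-2 * Real.cosh q) n = Real.sinh (((n:ℝ)+1) * q) ∧
      Real.sinh q * pp (-2 * Real.cosh q) (n+1) = Real.sinh (((n:ℝ)+2) * q) := by
    intro n
    induction n with
    | zero =>
      constructor
      · rw [pp_zero]; norm_num
      · rw [pp_one]
        push_cast
        rw [show ((0:ℝ)+2) * q = 2 * q by ring, Real.sinh_two_mul]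
        ring
    | succ k ih =>
      obtain ⟨ih1, ih2⟩ := ih
      constructor
      · push_cast
        rw [show ((k:ℝ)+1+1) * q = ((k:ℝ)+2) * q by ring]
        exact ih2
      · rw [pp_two']
        have expand : Real.sinh q * (-(-2 * Real.cosh q) * pp (-2*Real.cosh q) (k+1)
              - pp (-2*Real.cosh q) k)
            = (2*Real.cosh q) * (Real.sinh q * pp (-2*Real.cosh q) (k+1))
              - Real.sinh q * pp (-2*Real.cosh q) k := by ring
        rw [expand, ih1, ih2]
        push_cast
        rw [show ((k:ℝ)+1+2) * q = ((k:ℝ)+2) * q + q by ring, Real.sinh_add,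
          show ((k:ℝ)+1) * q = ((k:ℝ)+2) * q - q by ring, Real.sinh_sub]
        ring
  exact fun n => (key n).1

lemma pp_neg (μ : ℝ) : ∀ n : ℕ, pp μ n = (-1)^n * pp (-μ) n := by
  have key : ∀ n : ℕ, pp μ n = (-1)^n * pp (-μ) n ∧
      pp μ (n+1) = (-1)^(n+1) * pp (-μ) (n+1) := by
    intro n
    induction n with
    | zero => constructor <;> simp [pp_zero, pp_one]
    | succ k ih =>
      obtain ⟨ih1, ih2⟩ := ih
      refine ⟨ih2, ?_⟩
      rw [pp_two', pp_two', ih1, ih2]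
      ring
  exact fun n => (key n).1

lemma exists_cosh {t : ℝ} (ht : 1 < t) : ∃ q > 0, Real.cosh q = t := by
  have h1 : t ≤ Real.cosh t := by
    have := Real.self_lt_sinh_iff.mpr (by linarith : (0:ℝ) < t)
    have h2 : Real.sinh t < Real.cosh t := by
      have := Real.cosh_sub_sinh t
      nlinarith [Real.exp_pos (-t)]
    linarith
  have h0 : Real.cosh 0 = 1 := Real.cosh_zero
  have := intermediate_value_Icc (by linarith : (0:ℝ) ≤ t)
    (Real.continuous_cosh.continuousOn)
  have ht' : t ∈ Set.Icc (Real.cosh 0) (Real.cosh t) := by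
    rw [h0]; exact ⟨le_of_lt ht, h1⟩
  obtain ⟨q, hq, hqe⟩ := this ht'
  refine ⟨q, ?_, hqe⟩
  rcases lt_or_eq_of_le hq.1 with h | h
  · exact h
  · exfalso; rw [← h, h0] at hqe; linarith

lemma HLR_symm (M : ℕ) (R : ℝ) : (HLR (M+1) 0 R)ᵀ = HLR (M+1) 0 R := by
  ext i j
  simp only [HLR, walkM, Matrix.transpose_apply, Matrix.add_apply, Matrix.of_apply,
    Matrix.single]
  congr 1
  · congr 1
    · exact if_congr or_comm rfl rfl
    · exact if_congr and_comm rfl rfl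
  · exact if_congr and_comm rfl rfl

lemma pp_pos {μ : ℝ} (hμ : μ < -2) (n : ℕ) : 0 < pp μ n := by
  obtain ⟨q, hq, hcq⟩ := exists_cosh (show 1 < -μ/2 by linarith)
  have hμq : μ = -2 * Real.cosh q := by rw [hcq]; ring
  have hs := pp_sinh q n
  rw [← hμq] at hs
  have hsq : 0 < Real.sinh q := Real.sinh_pos_iff.mpr hq
  have hsn : 0 < Real.sinh (((n:ℝ)+1) * q) := Real.sinh_pos_iff.mpr (by positivity)
  nlinarith

lemma eig_unique (M : ℕ) (R : ℝ) {μ1 μ2 : ℝ}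
    (h1 : hasEig (HLR (M+1) 0 R) μ1) (l1 : μ1 < -2)
    (h2 : hasEig (HLR (M+1) 0 R) μ2) (l2 : μ2 < -2) : μ1 = μ2 := by
  by_contra hne
  have c1 := (eig_iff M R μ1).mp h1
  have c2 := (eig_iff M R μ2).mp h2
  set v : Fin (M+2) → ℝ := fun i => pp μ1 (i:ℕ) with hv
  set w : Fin (M+2) → ℝ := fun i => pp μ2 (i:ℕ) with hw
  have hvec : v ᵥ* (HLR (M+1) 0 R) = (HLR (M+1) 0 R) *ᵥ v := by
    conv_lhs => rw [← HLR_symm M R]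
    rw [Matrix.vecMul_transpose]
  have e1 : v ⬝ᵥ ((HLR (M+1) 0 R) *ᵥ w) = μ2 * (v ⬝ᵥ w) := by
    rw [eig_vec M R μ2 c2, dotProduct_smul, smul_eq_mul]
  have e2 : v ⬝ᵥ ((HLR (M+1) 0 R) *ᵥ w) = μ1 * (v ⬝ᵥ w) := by
    rw [Matrix.dotProduct_mulVec, hvec, eig_vec M R μ1 c1, smul_dotProduct,
      smul_eq_mul]
  have hd : v ⬝ᵥ w = 0 := by
    have : (μ1 - μ2) * (v ⬝ᵥ w) = 0 := by linarith [e1.symm.trans e2]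
    rcases mul_eq_zero.mp this with h | h
    · exact absurd (by linarith : μ1 = μ2) hne
    · exact h
  have hpos : 0 < v ⬝ᵥ w := by
    apply Finset.sum_pos
    · intro i _
      exact mul_pos (pp_pos l1 _) (pp_pos l2 _)
    · exact Finset.univ_nonempty
  linarith

lemma eig_le_two (M : ℕ) {R μ : ℝ} (hR : 1 < R)
    (h : hasEig (HLR (M+1) 0 R) μ) : μ ≤ 2 := by
  by_contra hgt
  push_neg at hgt
  have c := (eig_iff M R μ).mp h
  obtain ⟨q, hq, hcq⟩ := exists_cosh (show 1 < μ/2 by linarith)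
  have hμq : -μ = -2 * Real.cosh q := by rw [hcq]; ring
  have s1 := pp_sinh q M
  have s2 := pp_sinh q (M+1)
  rw [← hμq] at s1 s2
  push_cast at s2
  rw [show ((M:ℝ)+1+1) * q = ((M:ℝ)+2) * q by ring] at s2
  have m1 : pp (-μ) M = (-1)^M * pp μ M := by rw [pp_neg (-μ) M, neg_neg]
  have m2 : pp (-μ) (M+1) = (-1)^(M+1) * pp μ (M+1) := by rw [pp_neg (-μ) (M+1), neg_neg]
  have key : Real.sinh (((M:ℝ)+1)*q) = (μ+R) * Real.sinh (((M:ℝ)+2)*q) := by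
    rw [← s1, ← s2, m1, m2, pow_succ]
    linear_combination (Real.sinh q * (-1:ℝ)^M) * c
  have ha : 0 < Real.sinh (((M:ℝ)+1)*q) := Real.sinh_pos_iff.mpr (by positivity)
  have hab : Real.sinh (((M:ℝ)+1)*q) < Real.sinh (((M:ℝ)+2)*q) := by
    apply Real.sinh_lt_sinh.mpr
    nlinarith
  nlinarith

noncomputable def G (M : ℕ) (R q : ℝ) : ℝ :=
  Real.sinh (((M:ℝ)+1) * q) + (R - 2 * Real.cosh q) * Real.sinh (((M:ℝ)+2) * q)

lemma G_eq (M : ℕ) (R q : ℝ) :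
    G M R q = (R - Real.exp q) * Real.sinh (((M:ℝ)+2) * q)
      - Real.exp (-(((M:ℝ)+2) * q)) * Real.sinh q := by
  rw [G, Real.sinh_eq, Real.sinh_eq, Real.sinh_eq, Real.cosh_eq]
  have e1 : Real.exp (((M:ℝ)+2) * q) = Real.exp (((M:ℝ)+1) * q) * Real.exp q := by
    rw [← Real.exp_add]; ring_nf
  have e2 : Real.exp (-(((M:ℝ)+2) * q)) = Real.exp (-(((M:ℝ)+1) * q)) * Real.exp (-q) := by
    rw [← Real.exp_add]; ring_nf
  have e3 : Real.exp (-(((M:ℝ)+1) * q)) = (Real.exp (((M:ℝ)+1) * q))⁻¹ := by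
    rw [← Real.exp_neg]
  have e4 : Real.exp (-q) = (Real.exp q)⁻¹ := by rw [← Real.exp_neg]
  rw [e1, e2, e3, e4]
  have h1 := Real.exp_ne_zero (((M:ℝ)+1) * q)
  have h2 := Real.exp_ne_zero q
  field_simp
  ring

lemma eig_of_root {M : ℕ} {R q : ℝ} (hq : 0 < q) (hG : G M R q = 0) :
    hasEig (HLR (M+1) 0 R) (-2 * Real.cosh q) := by
  rw [eig_iff]
  have hsq : 0 < Real.sinh q := Real.sinh_pos_iff.mpr hq
  have h1 := pp_sinh q M
  have h2 := pp_sinh q (M+1)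
  push_cast at h2
  rw [show ((M:ℝ)+1+1) * q = ((M:ℝ)+2) * q by ring] at h2
  have hmain : Real.sinh q * (pp (-2*Real.cosh q) M
      + ((-2*Real.cosh q) + R) * pp (-2*Real.cosh q) (M+1)) = G M R q := by
    rw [G]
    linear_combination h1 + (R - 2*Real.cosh q) * h2
  have := hmain.trans hG
  rcases mul_eq_zero.mp this with h | h
  · exact absurd h (ne_of_gt hsq)
  · exact h

lemma exists_root (R : ℝ) (hR : 1 < R) (q₀ : ℝ) (h0 : 0 < q₀) (hc : q₀ < Real.log R) :
    ∃ K : ℕ, ∀ M : ℕ, K ≤ M → ∃ q ∈ Set.Icc q₀ (Real.log R), G M R q = 0 := by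
  have hR0 : (0:ℝ) < R := by linarith
  have hexp : Real.exp q₀ < R := by
    have := Real.exp_lt_exp.mpr hc
    rwa [Real.exp_log hR0] at this
  have hc0 : 0 < Real.log R := lt_trans h0 hc
  obtain ⟨K, hK⟩ := exists_nat_gt (Real.sinh q₀ / ((R - Real.exp q₀) * q₀))
  refine ⟨K, fun M hM => ?_⟩
  have hpos : 0 < G M R q₀ := by
    rw [G_eq]
    have hs1 : ((M:ℝ)+2) * q₀ ≤ Real.sinh (((M:ℝ)+2)*q₀) :=
      le_of_lt (Real.self_lt_sinh_iff.mpr (by positivity))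
    have hs2 : Real.exp (-(((M:ℝ)+2)*q₀)) ≤ 1 := by
      rw [Real.exp_le_one_iff]
      nlinarith
    have hMK : Real.sinh q₀ / ((R - Real.exp q₀) * q₀) < (M:ℝ) + 2 := by
      have h1 : (K:ℝ) ≤ (M:ℝ) := Nat.cast_le.mpr hM
      linarith
    have hKM : Real.sinh q₀ < (R - Real.exp q₀) * (((M:ℝ)+2) * q₀) := by
      rw [div_lt_iff₀ (mul_pos (by linarith) h0 : 0 < (R - Real.exp q₀) * q₀)] at hMK
      nlinarith
    have hsq₀ : 0 < Real.sinh q₀ := Real.sinh_pos_iff.mpr h0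
    nlinarith [Real.exp_pos (-(((M:ℝ)+2)*q₀))]
  have hneg : G M R (Real.log R) < 0 := by
    rw [G_eq, Real.exp_log hR0, sub_self, zero_mul, zero_sub]
    have : 0 < Real.exp (-(((M:ℝ)+2)*Real.log R)) * Real.sinh (Real.log R) :=
      mul_pos (Real.exp_pos _) (Real.sinh_pos_iff.mpr hc0)
    linarith
  have hcont : ContinuousOn (fun q => G M R q) (Set.Icc q₀ (Real.log R)) := by
    apply Continuous.continuousOn
    unfold G
    fun_prop
  have h0mem : (0:ℝ) ∈ Set.Icc (G M R (Real.log R)) (G M R q₀) :=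
    ⟨le_of_lt hneg, le_of_lt hpos⟩
  obtain ⟨q, hq, hGq⟩ := intermediate_value_Icc' (le_of_lt hc) hcont h0mem
  exact ⟨q, hq, hGq⟩

end Stmt14

open Stmt14 in
/-- For `R > 1` and all large enough `N`, the matrix
`H_N^{(0,R)} = −R|N⟩⟨N| + H_N^walk` has exactly one eigenvalue strictly below
`−2`, all its other eigenvalues lie in `[−2, 2]`, and as `N → ∞` the
below-`−2` eigenvalue converges to `−(R + 1/R)`. -/
theorem stmt_14 (R : ℝ) (hR : 1 < R) :
    (∃ N₁ : ℕ, ∀ N : ℕ, N₁ ≤ N →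
      (∃! μ : ℝ, hasEig (HLR N 0 R) μ ∧ μ < -2) ∧
      ∀ μ : ℝ, hasEig (HLR N 0 R) μ → ¬ μ < -2 → μ ∈ Set.Icc (-2 : ℝ) 2) ∧
    ∀ ε : ℝ, 0 < ε → ∃ N₀ : ℕ, ∀ N : ℕ, N₀ ≤ N →
      ∀ μ : ℝ, hasEig (HLR N 0 R) μ → μ < -2 → |μ + (R + 1/R)| < ε := by
  have hR0 : (0:ℝ) < R := by linarith
  have hc0 : 0 < Real.log R := Real.log_pos hR
  have hcosh_c : 2 * Real.cosh (Real.log R) = R + 1/R := by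
    rw [Real.cosh_eq, Real.exp_log hR0, Real.exp_neg, Real.exp_log hR0]
    field_simp
  constructor
  · obtain ⟨K, hK⟩ := exists_root R hR (Real.log R / 2) (by linarith) (by linarith)
    refine ⟨K+1, fun N hN => ?_⟩
    obtain ⟨M, rfl⟩ : ∃ M, N = M+1 := ⟨N-1, by omega⟩
    obtain ⟨q, hqmem, hGq⟩ := hK M (by omega)
    have hq0 : 0 < q := lt_of_lt_of_le (by linarith) hqmem.1
    have heig := eig_of_root hq0 hGq
    have hlt : -2 * Real.cosh q < -2 := by
      have := Real.one_lt_cosh.mpr (ne_of_gt hq0)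
      linarith
    constructor
    · refine ⟨-2*Real.cosh q, ⟨heig, hlt⟩, ?_⟩
      rintro μ ⟨hμe, hμl⟩
      exact eig_unique M R hμe hμl heig hlt
    · intro μ hμe hnl
      exact Set.mem_Icc.mpr ⟨not_lt.mp hnl, eig_le_two M hR hμe⟩
  · intro ε hε
    obtain ⟨δ, hδ0, hδ⟩ := Metric.continuous_iff.mp Real.continuous_cosh (Real.log R)
      (ε/4) (by linarith)
    set δ' := min (δ/2) (Real.log R/2) with hδ'def
    have hδ'1 : δ' ≤ δ/2 := min_le_left _ _
    have hδ'2 : δ' ≤ Real.log R/2 := min_le_right _ _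
    have hδ'0 : 0 < δ' := lt_min (by linarith) (by linarith)
    have hq₀0 : 0 < Real.log R - δ' := by linarith
    obtain ⟨K, hK⟩ := exists_root R hR (Real.log R - δ') hq₀0 (by linarith)
    refine ⟨K+1, fun N hN μ hμe hμl => ?_⟩
    obtain ⟨M, rfl⟩ : ∃ M, N = M+1 := ⟨N-1, by omega⟩
    obtain ⟨q, hqmem, hGq⟩ := hK M (by omega)
    have hq0 : 0 < q := lt_of_lt_of_le hq₀0 hqmem.1
    have heig := eig_of_root hq0 hGq
    have hlt : -2 * Real.cosh q < -2 := by
      have := Real.one_lt_cosh.mpr (ne_of_gt hq0)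
      linarith
    have hμeq : μ = -2 * Real.cosh q := eig_unique M R hμe hμl heig hlt
    have hdist : dist q (Real.log R) < δ := by
      rw [Real.dist_eq, abs_lt]
      constructor
      · have := hqmem.1; linarith
      · have := hqmem.2; linarith
    have hcd := hδ q hdist
    rw [Real.dist_eq] at hcd
    rw [hμeq, ← hcosh_c]
    have habs : -2 * Real.cosh q + 2 * Real.cosh (Real.log R)
        = -(2 * (Real.cosh q - Real.cosh (Real.log R))) := by ring
    rw [habs, abs_neg, abs_mul, abs_two]
    linarith [abs_nonneg (Real.cosh q - Real.cosh (Real.log R))]
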